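/- Fix integers 2 ≤ k ≤ l. Consider on ℝ³ (coordinates x, y, z) the family of vector fields: ∂x, x∂x, x²∂x + (k−1)xy∂y + (l−1)xz∂z, y∂y, z∂z; x^i∂y for i = 0, …, k−1; and x^j∂z for j = 0, …, l−1. These 5 + k + l vector fields are linearly independent over ℝ, and their span is closed under the Lie bracket of vector fields. -/

import Mathlib

open scoped BigOperators

/-- The family of `5 + k + l` vector fields of Statement 18 on `ℝ³` (coordinates `x, y, z`):
`∂x, x∂x, x²∂x + (k−1)xy∂y + (l−1)xz∂z, y∂y, z∂z`; `xⁱ∂y` for `i = 0, …, k−1`; and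
`xʲ∂z` for `j = 0, …, l−1`. -/
noncomputable def famShift (k l : ℕ) :
    (Fin 5 ⊕ Fin k ⊕ Fin l) → ((Fin 3 → ℝ) → (Fin 3 → ℝ)) :=
  Sum.elim
    ![fun _ => ![1, 0, 0],
      fun p => ![p 0, 0, 0],
      fun p => ![(p 0)^2, ((k : ℝ) - 1) * (p 0 * p 1), ((l : ℝ) - 1) * (p 0 * p 2)],
      fun p => ![0, p 1, 0],
      fun p => ![0, 0, p 2]]
    (Sum.elim
      (fun i => fun p => ![0, (p 0) ^ (i : ℕ), 0])
      (fun j => fun p => ![0, 0, (p 0) ^ (j : ℕ)]))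

lemma poly_aux {n : ℕ} (f : Fin n → ℝ) (h : ∀ t : ℝ, ∑ i, f i * t ^ (i : ℕ) = 0) :
    ∀ i, f i = 0 := by
  set P : Polynomial ℝ := ∑ i, Polynomial.C (f i) * Polynomial.X ^ (i : ℕ) with hP
  have hev : ∀ t : ℝ, P.eval t = 0 := by
    intro t
    simp [hP, Polynomial.eval_finset_sum, h t]
  have hP0 : P = 0 := by
    have := Polynomial.funext (R := ℝ) (p := P) (q := 0) (by simpa using hev)
    simpa using this
  intro i
  have : P.coeff (i : ℕ) = f i := by
    rw [hP, Polynomial.finset_sum_coeff]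
    rw [Finset.sum_eq_single i]
    · simp
    · intro b _ hb
      rw [Polynomial.coeff_C_mul, Polynomial.coeff_X_pow, if_neg (fun h' => hb (Fin.ext h'.symm)),
        mul_zero]
    · simp
  rw [hP0] at this
  simpa using this.symm

noncomputable def VF (f g h u v : ℝ → ℝ) : (Fin 3 → ℝ) → (Fin 3 → ℝ) :=
  fun p => ![f (p 0), g (p 0) * p 1 + u (p 0), h (p 0) * p 2 + v (p 0)]

noncomputable def projL (i : Fin 3) : (Fin 3 → ℝ) →L[ℝ] ℝ :=
  ContinuousLinearMap.proj i

lemma hasFDerivAt_projL (i : Fin 3) (p : Fin 3 → ℝ) :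
    HasFDerivAt (fun q : Fin 3 → ℝ => q i) (projL i) p :=
  (projL i).hasFDerivAt

lemma hasFDerivAt_comp0 (f : ℝ → ℝ) (hf : Differentiable ℝ f) (p : Fin 3 → ℝ) :
    HasFDerivAt (fun q : Fin 3 → ℝ => f (q 0)) (deriv f (p 0) • projL 0) p :=
  ((hf (p 0)).hasDerivAt).comp_hasFDerivAt p (hasFDerivAt_projL 0 p)

lemma fderiv_comp0_apply (f : ℝ → ℝ) (hf : Differentiable ℝ f) (p v : Fin 3 → ℝ) :
    fderiv ℝ (fun q : Fin 3 → ℝ => f (q 0)) p v = deriv f (p 0) * v 0 := by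
  rw [(hasFDerivAt_comp0 f hf p).fderiv]
  simp [projL]

lemma diff_comp0 (f : ℝ → ℝ) (hf : Differentiable ℝ f) :
    Differentiable ℝ (fun q : Fin 3 → ℝ => f (q 0)) :=
  fun p => (hasFDerivAt_comp0 f hf p).differentiableAt

lemma diff_compi (g u : ℝ → ℝ) (hg : Differentiable ℝ g) (hu : Differentiable ℝ u) (i : Fin 3) :
    Differentiable ℝ (fun q : Fin 3 → ℝ => g (q 0) * q i + u (q 0)) := by
  have hq : Differentiable ℝ (fun q : Fin 3 → ℝ => q i) :=
    fun p => (hasFDerivAt_projL i p).differentiableAt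
  exact ((diff_comp0 g hg).mul hq).add (diff_comp0 u hu)

lemma fderiv_compi_apply (g u : ℝ → ℝ) (hg : Differentiable ℝ g) (hu : Differentiable ℝ u)
    (i : Fin 3) (p v : Fin 3 → ℝ) :
    fderiv ℝ (fun q : Fin 3 → ℝ => g (q 0) * q i + u (q 0)) p v =
      deriv g (p 0) * v 0 * p i + g (p 0) * v i + deriv u (p 0) * v 0 := by
  have h := (((hasFDerivAt_comp0 g hg p).mul' (hasFDerivAt_projL i p)).add
      (hasFDerivAt_comp0 u hu p)).fderiv
  rw [show (fun q : Fin 3 → ℝ => g (q 0) * q i + u (q 0)) = ((fun q => g (q 0)) * fun q => q i) + fun q => u (q 0) from rfl, h]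
  simp [projL]
  ring

lemma VF_diff (f g h u v : ℝ → ℝ) (hf : Differentiable ℝ f) (hg : Differentiable ℝ g)
    (hh : Differentiable ℝ h) (hu : Differentiable ℝ u) (hv : Differentiable ℝ v) :
    Differentiable ℝ (VF f g h u v) := by
  intro p
  apply differentiableAt_pi.2
  intro i
  fin_cases i
  · simpa [VF] using (diff_comp0 f hf) p
  · simpa [VF] using (diff_compi g u hg hu 1) p
  · simpa [VF] using (diff_compi h v hh hv 2) p

lemma fderiv_VF_apply (f g h u v : ℝ → ℝ) (hf : Differentiable ℝ f) (hg : Differentiable ℝ g)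
    (hh : Differentiable ℝ h) (hu : Differentiable ℝ u) (hv : Differentiable ℝ v)
    (p w : Fin 3 → ℝ) :
    fderiv ℝ (VF f g h u v) p w =
      ![deriv f (p 0) * w 0,
        deriv g (p 0) * w 0 * p 1 + g (p 0) * w 1 + deriv u (p 0) * w 0,
        deriv h (p 0) * w 0 * p 2 + h (p 0) * w 2 + deriv v (p 0) * w 0] := by
  have hcomp : ∀ i, DifferentiableAt ℝ (fun q => VF f g h u v q i) p := by
    intro i
    exact differentiableAt_pi.1 (VF_diff f g h u v hf hg hh hu hv p) i
  funext j
  have : (fderiv ℝ (VF f g h u v) p) w j = fderiv ℝ (fun q => VF f g h u v q j) p w := by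
    rw [fderiv_pi hcomp]
    rfl
  rw [this]
  fin_cases j
  · simpa [VF] using fderiv_comp0_apply f hf p w
  · simpa [VF] using fderiv_compi_apply g u hg hu 1 p w
  · simpa [VF] using fderiv_compi_apply h v hh hv 2 p w

lemma lieBracket_VF (f g h u v F G H U S : ℝ → ℝ)
    (hf : Differentiable ℝ f) (hg : Differentiable ℝ g) (hh : Differentiable ℝ h)
    (hu : Differentiable ℝ u) (hv : Differentiable ℝ v)
    (hF : Differentiable ℝ F) (hG : Differentiable ℝ G) (hH : Differentiable ℝ H)
    (hU : Differentiable ℝ U) (hS : Differentiable ℝ S) :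
    VectorField.lieBracket ℝ (VF f g h u v) (VF F G H U S) =
      VF (fun x => deriv F x * f x - deriv f x * F x)
         (fun x => deriv G x * f x - deriv g x * F x)
         (fun x => deriv H x * f x - deriv h x * F x)
         (fun x => deriv U x * f x + G x * u x - deriv u x * F x - g x * U x)
         (fun x => deriv S x * f x + H x * v x - deriv v x * F x - h x * S x) := by
  funext p
  have e1 := fderiv_VF_apply F G H U S hF hG hH hU hS p (VF f g h u v p)
  have e2 := fderiv_VF_apply f g h u v hf hg hh hu hv p (VF F G H U S p)
  show fderiv ℝ (VF F G H U S) p (VF f g h u v p) - fderiv ℝ (VF f g h u v) p (VF F G H U S p) = _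
  rw [e1, e2]
  funext j
  fin_cases j <;> simp [VF] <;> ring

lemma VF_ext {f₁ g₁ h₁ u₁ v₁ f₂ g₂ h₂ u₂ v₂ : ℝ → ℝ}
    (hf : ∀ x, f₁ x = f₂ x) (hg : ∀ x, g₁ x = g₂ x) (hh : ∀ x, h₁ x = h₂ x)
    (hu : ∀ x, u₁ x = u₂ x) (hv : ∀ x, v₁ x = v₂ x) :
    VF f₁ g₁ h₁ u₁ v₁ = VF f₂ g₂ h₂ u₂ v₂ := by
  rw [funext hf, funext hg, funext hh, funext hu, funext hv]

lemma VF_eq_zero {f g h u v : ℝ → ℝ}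
    (hf : ∀ x, f x = 0) (hg : ∀ x, g x = 0) (hh : ∀ x, h x = 0)
    (hu : ∀ x, u x = 0) (hv : ∀ x, v x = 0) :
    VF f g h u v = 0 := by
  funext p j
  fin_cases j <;> simp [VF, hf, hg, hh, hu, hv]

lemma VF_smul (c : ℝ) (f g h u v : ℝ → ℝ) :
    c • VF f g h u v =
      VF (fun x => c * f x) (fun x => c * g x) (fun x => c * h x)
         (fun x => c * u x) (fun x => c * v x) := by
  funext p j
  fin_cases j <;> simp [VF] <;> ring

lemma VF_add (f₁ g₁ h₁ u₁ v₁ f₂ g₂ h₂ u₂ v₂ : ℝ → ℝ) :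
    VF f₁ g₁ h₁ u₁ v₁ + VF f₂ g₂ h₂ u₂ v₂ =
      VF (fun x => f₁ x + f₂ x) (fun x => g₁ x + g₂ x) (fun x => h₁ x + h₂ x)
         (fun x => u₁ x + u₂ x) (fun x => v₁ x + v₂ x) := by
  funext p j
  fin_cases j <;> simp [VF] <;> ring

lemma deriv_linear (c : ℝ) (x : ℝ) : deriv (fun y : ℝ => c * y) x = c := by
  rw [deriv_const_mul_field']; simp

lemma deriv_mul_sub (c : ℝ) (x : ℝ) : deriv (fun y : ℝ => c * y - y) x = c - 1 := by
  have h : (fun y : ℝ => c * y - y) = fun y : ℝ => (c - 1) * y := by funext y; ring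
  rw [h, deriv_linear]

section Fam

variable (k l : ℕ)

lemma fam_e0 : famShift k l (Sum.inl 0) = VF (fun _ => 1) (fun _ => 0) (fun _ => 0) (fun _ => 0) (fun _ => 0) := by
  funext p j; fin_cases j <;> simp [famShift, VF, Matrix.vecHead, Matrix.vecTail]

lemma fam_e1 : famShift k l (Sum.inl 1) = VF (fun x => x) (fun _ => 0) (fun _ => 0) (fun _ => 0) (fun _ => 0) := by
  funext p j; fin_cases j <;> simp [famShift, VF, Matrix.vecHead, Matrix.vecTail]

lemma fam_e2 : famShift k l (Sum.inl 2) = VF (fun x => x^2) (fun x => ((k:ℝ)-1) * x) (fun x => ((l:ℝ)-1) * x) (fun _ => 0) (fun _ => 0) := by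
  funext p j; fin_cases j <;> simp [famShift, VF, Matrix.vecHead, Matrix.vecTail] <;> ring

lemma fam_e3 : famShift k l (Sum.inl 3) = VF (fun _ => 0) (fun _ => 1) (fun _ => 0) (fun _ => 0) (fun _ => 0) := by
  funext p j; fin_cases j <;> simp [famShift, VF, Matrix.vecHead, Matrix.vecTail]

lemma fam_e4 : famShift k l (Sum.inl 4) = VF (fun _ => 0) (fun _ => 0) (fun _ => 1) (fun _ => 0) (fun _ => 0) := by
  funext p j; fin_cases j <;> simp [famShift, VF, Matrix.vecHead, Matrix.vecTail]

lemma fam_F (i : Fin k) : famShift k l (Sum.inr (Sum.inl i)) = VF (fun _ => 0) (fun _ => 0) (fun _ => 0) (fun x => x ^ (i:ℕ)) (fun _ => 0) := by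
  funext p j; fin_cases j <;> simp [famShift, VF, Matrix.vecHead, Matrix.vecTail]

lemma fam_H (j : Fin l) : famShift k l (Sum.inr (Sum.inr j)) = VF (fun _ => 0) (fun _ => 0) (fun _ => 0) (fun _ => 0) (fun x => x ^ (j:ℕ)) := by
  funext p i; fin_cases i <;> simp [famShift, VF, Matrix.vecHead, Matrix.vecTail]


lemma fam_e0' (a : Fin 5) (ha : (a:ℕ) = 0) : famShift k l (Sum.inl a) = VF (fun _ => 1) (fun _ => 0) (fun _ => 0) (fun _ => 0) (fun _ => 0) := by
  have : a = 0 := Fin.ext (by rw [ha]; rfl)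
  rw [this, fam_e0]

lemma fam_e1' (a : Fin 5) (ha : (a:ℕ) = 1) : famShift k l (Sum.inl a) = VF (fun x => x) (fun _ => 0) (fun _ => 0) (fun _ => 0) (fun _ => 0) := by
  have : a = 1 := Fin.ext (by rw [ha]; rfl)
  rw [this, fam_e1]

lemma fam_e2' (a : Fin 5) (ha : (a:ℕ) = 2) : famShift k l (Sum.inl a) = VF (fun x => x^2) (fun x => ((k:ℝ)-1) * x) (fun x => ((l:ℝ)-1) * x) (fun _ => 0) (fun _ => 0) := by
  have : a = 2 := Fin.ext (by rw [ha]; rfl)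
  rw [this, fam_e2]

lemma fam_e3' (a : Fin 5) (ha : (a:ℕ) = 3) : famShift k l (Sum.inl a) = VF (fun _ => 0) (fun _ => 1) (fun _ => 0) (fun _ => 0) (fun _ => 0) := by
  have : a = 3 := Fin.ext (by rw [ha]; rfl)
  rw [this, fam_e3]

lemma fam_e4' (a : Fin 5) (ha : (a:ℕ) = 4) : famShift k l (Sum.inl a) = VF (fun _ => 0) (fun _ => 0) (fun _ => 1) (fun _ => 0) (fun _ => 0) := by
  have : a = 4 := Fin.ext (by rw [ha]; rfl)
  rw [this, fam_e4]

lemma mem_fam (a : Fin 5 ⊕ Fin k ⊕ Fin l) :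
    famShift k l a ∈ Submodule.span ℝ (Set.range (famShift k l)) :=
  Submodule.subset_span ⟨a, rfl⟩

lemma mem_span_of_eq {M : Type*} [AddCommMonoid M] [Module ℝ M] {N : Submodule ℝ M}
    {V W : M} (h : V = W) (hW : W ∈ N) : V ∈ N := h ▸ hW

lemma fam_diff (a : Fin 5 ⊕ Fin k ⊕ Fin l) : Differentiable ℝ (famShift k l a) := by
  have dC : ∀ c : ℝ, Differentiable ℝ (fun _ : ℝ => c) := fun c => differentiable_const c
  rcases a with a | i | j
  · obtain ⟨n, hn⟩ := a
    interval_cases n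
    · rw [fam_e0' k l _ rfl]; exact VF_diff _ _ _ _ _ (dC 1) (dC 0) (dC 0) (dC 0) (dC 0)
    · rw [fam_e1' k l _ rfl]; exact VF_diff _ _ _ _ _ differentiable_fun_id (dC 0) (dC 0) (dC 0) (dC 0)
    · rw [fam_e2' k l _ rfl]
      exact VF_diff _ _ _ _ _ (differentiable_pow 2) (differentiable_fun_id.const_mul _)
        (differentiable_fun_id.const_mul _) (dC 0) (dC 0)
    · rw [fam_e3' k l _ rfl]; exact VF_diff _ _ _ _ _ (dC 0) (dC 1) (dC 0) (dC 0) (dC 0)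
    · rw [fam_e4' k l _ rfl]; exact VF_diff _ _ _ _ _ (dC 0) (dC 0) (dC 1) (dC 0) (dC 0)
  · rw [fam_F]
    exact VF_diff _ _ _ _ _ (dC 0) (dC 0) (dC 0) (differentiable_pow _) (dC 0)
  · rw [fam_H]
    exact VF_diff _ _ _ _ _ (dC 0) (dC 0) (dC 0) (dC 0) (differentiable_pow _)

end Fam
lemma bracket_base (k l : ℕ) (hk : 2 ≤ k) (hkl : k ≤ l)
    (a b : Fin 5 ⊕ Fin k ⊕ Fin l) :
    VectorField.lieBracket ℝ (famShift k l a) (famShift k l b) ∈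
      Submodule.span ℝ (Set.range (famShift k l)) := by
  have dC : ∀ c : ℝ, Differentiable ℝ (fun _ : ℝ => c) := fun c => differentiable_const c
  rcases a with a | i | i
  · obtain ⟨n, hn⟩ := a
    interval_cases n
    · rcases b with b | j | j
      · obtain ⟨m, hm⟩ := b
        interval_cases m
        · simp only [VectorField.lieBracket_self]
          exact Submodule.zero_mem _
        · rw [fam_e0' k l _ rfl, fam_e1' k l _ rfl, lieBracket_VF _ _ _ _ _ _ _ _ _ _ (dC 1) (dC 0) (dC 0) (dC 0) (dC 0) differentiable_fun_id (dC 0) (dC 0) (dC 0) (dC 0)]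
          refine mem_span_of_eq ?_ (Submodule.smul_mem _ ((1:ℝ)) (mem_fam k l (Sum.inl 0)))
          rw [fam_e0, VF_smul]
          refine VF_ext ?_ ?_ ?_ ?_ ?_ <;> intro x <;> simp [deriv_const, deriv_id'', deriv_pow_field, deriv_const_mul_field', deriv_linear, deriv_mul_sub] <;> try ring
        · rw [fam_e0' k l _ rfl, fam_e2' k l _ rfl, lieBracket_VF _ _ _ _ _ _ _ _ _ _ (dC 1) (dC 0) (dC 0) (dC 0) (dC 0) (differentiable_pow 2) (differentiable_fun_id.const_mul _) (differentiable_fun_id.const_mul _) (dC 0) (dC 0)]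
          refine mem_span_of_eq ?_ (Submodule.add_mem _ (Submodule.add_mem _
            (Submodule.smul_mem _ ((2:ℝ)) (mem_fam k l (Sum.inl 1)))
            (Submodule.smul_mem _ (((k:ℝ)-1)) (mem_fam k l (Sum.inl 3))))
            (Submodule.smul_mem _ (((l:ℝ)-1)) (mem_fam k l (Sum.inl 4))))
          rw [fam_e1, fam_e3, fam_e4, VF_smul, VF_smul, VF_smul, VF_add, VF_add]
          refine VF_ext ?_ ?_ ?_ ?_ ?_ <;> intro x <;> simp [deriv_const, deriv_id'', deriv_pow_field, deriv_const_mul_field', deriv_linear, deriv_mul_sub] <;> try ring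
        · rw [fam_e0' k l _ rfl, fam_e3' k l _ rfl, lieBracket_VF _ _ _ _ _ _ _ _ _ _ (dC 1) (dC 0) (dC 0) (dC 0) (dC 0) (dC 0) (dC 1) (dC 0) (dC 0) (dC 0)]
          refine mem_span_of_eq (VF_eq_zero ?_ ?_ ?_ ?_ ?_) (Submodule.zero_mem _) <;> intro x <;>
            simp [deriv_const, deriv_id'', deriv_pow_field, deriv_const_mul_field', deriv_linear, deriv_mul_sub] <;> try ring
        · rw [fam_e0' k l _ rfl, fam_e4' k l _ rfl, lieBracket_VF _ _ _ _ _ _ _ _ _ _ (dC 1) (dC 0) (dC 0) (dC 0) (dC 0) (dC 0) (dC 0) (dC 1) (dC 0) (dC 0)]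
          refine mem_span_of_eq (VF_eq_zero ?_ ?_ ?_ ?_ ?_) (Submodule.zero_mem _) <;> intro x <;>
            simp [deriv_const, deriv_id'', deriv_pow_field, deriv_const_mul_field', deriv_linear, deriv_mul_sub] <;> try ring
      · rw [fam_e0' k l _ rfl, fam_F k l j, lieBracket_VF _ _ _ _ _ _ _ _ _ _ (dC 1) (dC 0) (dC 0) (dC 0) (dC 0) (dC 0) (dC 0) (dC 0) (differentiable_pow _) (dC 0)]
        refine mem_span_of_eq ?_ (Submodule.smul_mem _ (((j:ℕ):ℝ)) (mem_fam k l (Sum.inr (Sum.inl ⟨(j:ℕ) - 1, by have := j.2; omega⟩))))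
        rw [fam_F, VF_smul]
        refine VF_ext ?_ ?_ ?_ ?_ ?_ <;> intro x <;> simp [deriv_const, deriv_id'', deriv_pow_field, deriv_const_mul_field', deriv_linear, deriv_mul_sub] <;> try ring
      · rw [fam_e0' k l _ rfl, fam_H k l j, lieBracket_VF _ _ _ _ _ _ _ _ _ _ (dC 1) (dC 0) (dC 0) (dC 0) (dC 0) (dC 0) (dC 0) (dC 0) (dC 0) (differentiable_pow _)]
        refine mem_span_of_eq ?_ (Submodule.smul_mem _ (((j:ℕ):ℝ)) (mem_fam k l (Sum.inr (Sum.inr ⟨(j:ℕ) - 1, by have := j.2; omega⟩))))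
        rw [fam_H, VF_smul]
        refine VF_ext ?_ ?_ ?_ ?_ ?_ <;> intro x <;> simp [deriv_const, deriv_id'', deriv_pow_field, deriv_const_mul_field', deriv_linear, deriv_mul_sub] <;> try ring
    · rcases b with b | j | j
      · obtain ⟨m, hm⟩ := b
        interval_cases m
        · rw [fam_e1' k l _ rfl, fam_e0' k l _ rfl, lieBracket_VF _ _ _ _ _ _ _ _ _ _ differentiable_fun_id (dC 0) (dC 0) (dC 0) (dC 0) (dC 1) (dC 0) (dC 0) (dC 0) (dC 0)]
          refine mem_span_of_eq ?_ (Submodule.smul_mem _ ((-1:ℝ)) (mem_fam k l (Sum.inl 0)))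
          rw [fam_e0, VF_smul]
          refine VF_ext ?_ ?_ ?_ ?_ ?_ <;> intro x <;> simp [deriv_const, deriv_id'', deriv_pow_field, deriv_const_mul_field', deriv_linear, deriv_mul_sub] <;> try ring
        · simp only [VectorField.lieBracket_self]
          exact Submodule.zero_mem _
        · rw [fam_e1' k l _ rfl, fam_e2' k l _ rfl, lieBracket_VF _ _ _ _ _ _ _ _ _ _ differentiable_fun_id (dC 0) (dC 0) (dC 0) (dC 0) (differentiable_pow 2) (differentiable_fun_id.const_mul _) (differentiable_fun_id.const_mul _) (dC 0) (dC 0)]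
          refine mem_span_of_eq ?_ (Submodule.smul_mem _ ((1:ℝ)) (mem_fam k l (Sum.inl 2)))
          rw [fam_e2, VF_smul]
          refine VF_ext ?_ ?_ ?_ ?_ ?_ <;> intro x <;> simp [deriv_const, deriv_id'', deriv_pow_field, deriv_const_mul_field', deriv_linear, deriv_mul_sub] <;> try ring
        · rw [fam_e1' k l _ rfl, fam_e3' k l _ rfl, lieBracket_VF _ _ _ _ _ _ _ _ _ _ differentiable_fun_id (dC 0) (dC 0) (dC 0) (dC 0) (dC 0) (dC 1) (dC 0) (dC 0) (dC 0)]
          refine mem_span_of_eq (VF_eq_zero ?_ ?_ ?_ ?_ ?_) (Submodule.zero_mem _) <;> intro x <;>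
            simp [deriv_const, deriv_id'', deriv_pow_field, deriv_const_mul_field', deriv_linear, deriv_mul_sub] <;> try ring
        · rw [fam_e1' k l _ rfl, fam_e4' k l _ rfl, lieBracket_VF _ _ _ _ _ _ _ _ _ _ differentiable_fun_id (dC 0) (dC 0) (dC 0) (dC 0) (dC 0) (dC 0) (dC 1) (dC 0) (dC 0)]
          refine mem_span_of_eq (VF_eq_zero ?_ ?_ ?_ ?_ ?_) (Submodule.zero_mem _) <;> intro x <;>
            simp [deriv_const, deriv_id'', deriv_pow_field, deriv_const_mul_field', deriv_linear, deriv_mul_sub] <;> try ring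
      · rw [fam_e1' k l _ rfl, fam_F k l j, lieBracket_VF _ _ _ _ _ _ _ _ _ _ differentiable_fun_id (dC 0) (dC 0) (dC 0) (dC 0) (dC 0) (dC 0) (dC 0) (differentiable_pow _) (dC 0)]
        refine mem_span_of_eq ?_ (Submodule.smul_mem _ (((j:ℕ):ℝ)) (mem_fam k l (Sum.inr (Sum.inl j))))
        rw [fam_F, VF_smul]
        refine VF_ext ?_ ?_ ?_ ?_ ?_ <;> intro x <;> simp [deriv_const, deriv_id'', deriv_pow_field, deriv_const_mul_field', deriv_linear, deriv_mul_sub]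
        obtain ⟨n, hn⟩ := j
        cases n with
        | zero => simp; try ring
        | succ m => simp [pow_succ]; try ring
      · rw [fam_e1' k l _ rfl, fam_H k l j, lieBracket_VF _ _ _ _ _ _ _ _ _ _ differentiable_fun_id (dC 0) (dC 0) (dC 0) (dC 0) (dC 0) (dC 0) (dC 0) (dC 0) (differentiable_pow _)]
        refine mem_span_of_eq ?_ (Submodule.smul_mem _ (((j:ℕ):ℝ)) (mem_fam k l (Sum.inr (Sum.inr j))))
        rw [fam_H, VF_smul]
        refine VF_ext ?_ ?_ ?_ ?_ ?_ <;> intro x <;> simp [deriv_const, deriv_id'', deriv_pow_field, deriv_const_mul_field', deriv_linear, deriv_mul_sub]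
        obtain ⟨n, hn⟩ := j
        cases n with
        | zero => simp; try ring
        | succ m => simp [pow_succ]; try ring
    · rcases b with b | j | j
      · obtain ⟨m, hm⟩ := b
        interval_cases m
        · rw [fam_e2' k l _ rfl, fam_e0' k l _ rfl, lieBracket_VF _ _ _ _ _ _ _ _ _ _ (differentiable_pow 2) (differentiable_fun_id.const_mul _) (differentiable_fun_id.const_mul _) (dC 0) (dC 0) (dC 1) (dC 0) (dC 0) (dC 0) (dC 0)]
          refine mem_span_of_eq ?_ (Submodule.add_mem _ (Submodule.add_mem _
            (Submodule.smul_mem _ ((-2:ℝ)) (mem_fam k l (Sum.inl 1)))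
            (Submodule.smul_mem _ ((1-(k:ℝ))) (mem_fam k l (Sum.inl 3))))
            (Submodule.smul_mem _ ((1-(l:ℝ))) (mem_fam k l (Sum.inl 4))))
          rw [fam_e1, fam_e3, fam_e4, VF_smul, VF_smul, VF_smul, VF_add, VF_add]
          refine VF_ext ?_ ?_ ?_ ?_ ?_ <;> intro x <;> simp [deriv_const, deriv_id'', deriv_pow_field, deriv_const_mul_field', deriv_linear, deriv_mul_sub] <;> try ring
        · rw [fam_e2' k l _ rfl, fam_e1' k l _ rfl, lieBracket_VF _ _ _ _ _ _ _ _ _ _ (differentiable_pow 2) (differentiable_fun_id.const_mul _) (differentiable_fun_id.const_mul _) (dC 0) (dC 0) differentiable_fun_id (dC 0) (dC 0) (dC 0) (dC 0)]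
          refine mem_span_of_eq ?_ (Submodule.smul_mem _ ((-1:ℝ)) (mem_fam k l (Sum.inl 2)))
          rw [fam_e2, VF_smul]
          refine VF_ext ?_ ?_ ?_ ?_ ?_ <;> intro x <;> simp [deriv_const, deriv_id'', deriv_pow_field, deriv_const_mul_field', deriv_linear, deriv_mul_sub] <;> try ring
        · simp only [VectorField.lieBracket_self]
          exact Submodule.zero_mem _
        · rw [fam_e2' k l _ rfl, fam_e3' k l _ rfl, lieBracket_VF _ _ _ _ _ _ _ _ _ _ (differentiable_pow 2) (differentiable_fun_id.const_mul _) (differentiable_fun_id.const_mul _) (dC 0) (dC 0) (dC 0) (dC 1) (dC 0) (dC 0) (dC 0)]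
          refine mem_span_of_eq (VF_eq_zero ?_ ?_ ?_ ?_ ?_) (Submodule.zero_mem _) <;> intro x <;>
            simp [deriv_const, deriv_id'', deriv_pow_field, deriv_const_mul_field', deriv_linear, deriv_mul_sub] <;> try ring
        · rw [fam_e2' k l _ rfl, fam_e4' k l _ rfl, lieBracket_VF _ _ _ _ _ _ _ _ _ _ (differentiable_pow 2) (differentiable_fun_id.const_mul _) (differentiable_fun_id.const_mul _) (dC 0) (dC 0) (dC 0) (dC 0) (dC 1) (dC 0) (dC 0)]
          refine mem_span_of_eq (VF_eq_zero ?_ ?_ ?_ ?_ ?_) (Submodule.zero_mem _) <;> intro x <;>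
            simp [deriv_const, deriv_id'', deriv_pow_field, deriv_const_mul_field', deriv_linear, deriv_mul_sub] <;> try ring
      · by_cases hsplit : (j:ℕ) + 1 < k
        · rw [fam_e2' k l _ rfl, fam_F k l j, lieBracket_VF _ _ _ _ _ _ _ _ _ _ (differentiable_pow 2) (differentiable_fun_id.const_mul _) (differentiable_fun_id.const_mul _) (dC 0) (dC 0) (dC 0) (dC 0) (dC 0) (differentiable_pow _) (dC 0)]
          refine mem_span_of_eq ?_ (Submodule.smul_mem _ ((((j:ℕ):ℝ) - ((k:ℝ)-1))) (mem_fam k l (Sum.inr (Sum.inl ⟨(j:ℕ) + 1, hsplit⟩))))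
          rw [fam_F, VF_smul]
          refine VF_ext ?_ ?_ ?_ ?_ ?_ <;> intro x <;> simp [deriv_const, deriv_id'', deriv_pow_field, deriv_const_mul_field', deriv_linear, deriv_mul_sub]
          obtain ⟨n, hn⟩ := j
          cases n with
          | zero => simp; try ring
          | succ m => simp [pow_succ]; try ring
        · have hedge : (j:ℕ) + 1 = k := by have := j.2; omega
          rw [fam_e2' k l _ rfl, fam_F k l j, lieBracket_VF _ _ _ _ _ _ _ _ _ _ (differentiable_pow 2) (differentiable_fun_id.const_mul _) (differentiable_fun_id.const_mul _) (dC 0) (dC 0) (dC 0) (dC 0) (dC 0) (differentiable_pow _) (dC 0)]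
          refine mem_span_of_eq (VF_eq_zero ?_ ?_ ?_ ?_ ?_) (Submodule.zero_mem _) <;> intro x <;>
            simp [deriv_const, deriv_id'', deriv_pow_field, deriv_const_mul_field', deriv_linear, deriv_mul_sub]
          obtain ⟨m2, hm2⟩ : ∃ m2, (j:ℕ) = m2 + 1 := ⟨(j:ℕ) - 1, by omega⟩

          rw [hm2] at hedge ⊢

          rw [← hedge]

          push_cast

          simp

          ring
      · by_cases hsplit : (j:ℕ) + 1 < l
        · rw [fam_e2' k l _ rfl, fam_H k l j, lieBracket_VF _ _ _ _ _ _ _ _ _ _ (differentiable_pow 2) (differentiable_fun_id.const_mul _) (differentiable_fun_id.const_mul _) (dC 0) (dC 0) (dC 0) (dC 0) (dC 0) (dC 0) (differentiable_pow _)]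
          refine mem_span_of_eq ?_ (Submodule.smul_mem _ ((((j:ℕ):ℝ) - ((l:ℝ)-1))) (mem_fam k l (Sum.inr (Sum.inr ⟨(j:ℕ) + 1, hsplit⟩))))
          rw [fam_H, VF_smul]
          refine VF_ext ?_ ?_ ?_ ?_ ?_ <;> intro x <;> simp [deriv_const, deriv_id'', deriv_pow_field, deriv_const_mul_field', deriv_linear, deriv_mul_sub]
          obtain ⟨n, hn⟩ := j
          cases n with
          | zero => simp; try ring
          | succ m => simp [pow_succ]; try ring
        · have hedge : (j:ℕ) + 1 = l := by have := j.2; omega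
          rw [fam_e2' k l _ rfl, fam_H k l j, lieBracket_VF _ _ _ _ _ _ _ _ _ _ (differentiable_pow 2) (differentiable_fun_id.const_mul _) (differentiable_fun_id.const_mul _) (dC 0) (dC 0) (dC 0) (dC 0) (dC 0) (dC 0) (differentiable_pow _)]
          refine mem_span_of_eq (VF_eq_zero ?_ ?_ ?_ ?_ ?_) (Submodule.zero_mem _) <;> intro x <;>
            simp [deriv_const, deriv_id'', deriv_pow_field, deriv_const_mul_field', deriv_linear, deriv_mul_sub]
          obtain ⟨m2, hm2⟩ : ∃ m2, (j:ℕ) = m2 + 1 := ⟨(j:ℕ) - 1, by omega⟩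

          rw [hm2] at hedge ⊢

          rw [← hedge]

          push_cast

          simp

          ring
    · rcases b with b | j | j
      · obtain ⟨m, hm⟩ := b
        interval_cases m
        · rw [fam_e3' k l _ rfl, fam_e0' k l _ rfl, lieBracket_VF _ _ _ _ _ _ _ _ _ _ (dC 0) (dC 1) (dC 0) (dC 0) (dC 0) (dC 1) (dC 0) (dC 0) (dC 0) (dC 0)]
          refine mem_span_of_eq (VF_eq_zero ?_ ?_ ?_ ?_ ?_) (Submodule.zero_mem _) <;> intro x <;>
            simp [deriv_const, deriv_id'', deriv_pow_field, deriv_const_mul_field', deriv_linear, deriv_mul_sub] <;> try ring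
        · rw [fam_e3' k l _ rfl, fam_e1' k l _ rfl, lieBracket_VF _ _ _ _ _ _ _ _ _ _ (dC 0) (dC 1) (dC 0) (dC 0) (dC 0) differentiable_fun_id (dC 0) (dC 0) (dC 0) (dC 0)]
          refine mem_span_of_eq (VF_eq_zero ?_ ?_ ?_ ?_ ?_) (Submodule.zero_mem _) <;> intro x <;>
            simp [deriv_const, deriv_id'', deriv_pow_field, deriv_const_mul_field', deriv_linear, deriv_mul_sub] <;> try ring
        · rw [fam_e3' k l _ rfl, fam_e2' k l _ rfl, lieBracket_VF _ _ _ _ _ _ _ _ _ _ (dC 0) (dC 1) (dC 0) (dC 0) (dC 0) (differentiable_pow 2) (differentiable_fun_id.const_mul _) (differentiable_fun_id.const_mul _) (dC 0) (dC 0)]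
          refine mem_span_of_eq (VF_eq_zero ?_ ?_ ?_ ?_ ?_) (Submodule.zero_mem _) <;> intro x <;>
            simp [deriv_const, deriv_id'', deriv_pow_field, deriv_const_mul_field', deriv_linear, deriv_mul_sub] <;> try ring
        · simp only [VectorField.lieBracket_self]
          exact Submodule.zero_mem _
        · rw [fam_e3' k l _ rfl, fam_e4' k l _ rfl, lieBracket_VF _ _ _ _ _ _ _ _ _ _ (dC 0) (dC 1) (dC 0) (dC 0) (dC 0) (dC 0) (dC 0) (dC 1) (dC 0) (dC 0)]
          refine mem_span_of_eq (VF_eq_zero ?_ ?_ ?_ ?_ ?_) (Submodule.zero_mem _) <;> intro x <;>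
            simp [deriv_const, deriv_id'', deriv_pow_field, deriv_const_mul_field', deriv_linear, deriv_mul_sub] <;> try ring
      · rw [fam_e3' k l _ rfl, fam_F k l j, lieBracket_VF _ _ _ _ _ _ _ _ _ _ (dC 0) (dC 1) (dC 0) (dC 0) (dC 0) (dC 0) (dC 0) (dC 0) (differentiable_pow _) (dC 0)]
        refine mem_span_of_eq ?_ (Submodule.smul_mem _ ((-1:ℝ)) (mem_fam k l (Sum.inr (Sum.inl j))))
        rw [fam_F, VF_smul]
        refine VF_ext ?_ ?_ ?_ ?_ ?_ <;> intro x <;> simp [deriv_const, deriv_id'', deriv_pow_field, deriv_const_mul_field', deriv_linear, deriv_mul_sub] <;> try ring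
      · rw [fam_e3' k l _ rfl, fam_H k l j, lieBracket_VF _ _ _ _ _ _ _ _ _ _ (dC 0) (dC 1) (dC 0) (dC 0) (dC 0) (dC 0) (dC 0) (dC 0) (dC 0) (differentiable_pow _)]
        refine mem_span_of_eq (VF_eq_zero ?_ ?_ ?_ ?_ ?_) (Submodule.zero_mem _) <;> intro x <;>
          simp [deriv_const, deriv_id'', deriv_pow_field, deriv_const_mul_field', deriv_linear, deriv_mul_sub] <;> try ring
    · rcases b with b | j | j
      · obtain ⟨m, hm⟩ := b
        interval_cases m
        · rw [fam_e4' k l _ rfl, fam_e0' k l _ rfl, lieBracket_VF _ _ _ _ _ _ _ _ _ _ (dC 0) (dC 0) (dC 1) (dC 0) (dC 0) (dC 1) (dC 0) (dC 0) (dC 0) (dC 0)]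
          refine mem_span_of_eq (VF_eq_zero ?_ ?_ ?_ ?_ ?_) (Submodule.zero_mem _) <;> intro x <;>
            simp [deriv_const, deriv_id'', deriv_pow_field, deriv_const_mul_field', deriv_linear, deriv_mul_sub] <;> try ring
        · rw [fam_e4' k l _ rfl, fam_e1' k l _ rfl, lieBracket_VF _ _ _ _ _ _ _ _ _ _ (dC 0) (dC 0) (dC 1) (dC 0) (dC 0) differentiable_fun_id (dC 0) (dC 0) (dC 0) (dC 0)]
          refine mem_span_of_eq (VF_eq_zero ?_ ?_ ?_ ?_ ?_) (Submodule.zero_mem _) <;> intro x <;>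
            simp [deriv_const, deriv_id'', deriv_pow_field, deriv_const_mul_field', deriv_linear, deriv_mul_sub] <;> try ring
        · rw [fam_e4' k l _ rfl, fam_e2' k l _ rfl, lieBracket_VF _ _ _ _ _ _ _ _ _ _ (dC 0) (dC 0) (dC 1) (dC 0) (dC 0) (differentiable_pow 2) (differentiable_fun_id.const_mul _) (differentiable_fun_id.const_mul _) (dC 0) (dC 0)]
          refine mem_span_of_eq (VF_eq_zero ?_ ?_ ?_ ?_ ?_) (Submodule.zero_mem _) <;> intro x <;>
            simp [deriv_const, deriv_id'', deriv_pow_field, deriv_const_mul_field', deriv_linear, deriv_mul_sub] <;> try ring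
        · rw [fam_e4' k l _ rfl, fam_e3' k l _ rfl, lieBracket_VF _ _ _ _ _ _ _ _ _ _ (dC 0) (dC 0) (dC 1) (dC 0) (dC 0) (dC 0) (dC 1) (dC 0) (dC 0) (dC 0)]
          refine mem_span_of_eq (VF_eq_zero ?_ ?_ ?_ ?_ ?_) (Submodule.zero_mem _) <;> intro x <;>
            simp [deriv_const, deriv_id'', deriv_pow_field, deriv_const_mul_field', deriv_linear, deriv_mul_sub] <;> try ring
        · simp only [VectorField.lieBracket_self]
          exact Submodule.zero_mem _
      · rw [fam_e4' k l _ rfl, fam_F k l j, lieBracket_VF _ _ _ _ _ _ _ _ _ _ (dC 0) (dC 0) (dC 1) (dC 0) (dC 0) (dC 0) (dC 0) (dC 0) (differentiable_pow _) (dC 0)]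
        refine mem_span_of_eq (VF_eq_zero ?_ ?_ ?_ ?_ ?_) (Submodule.zero_mem _) <;> intro x <;>
          simp [deriv_const, deriv_id'', deriv_pow_field, deriv_const_mul_field', deriv_linear, deriv_mul_sub] <;> try ring
      · rw [fam_e4' k l _ rfl, fam_H k l j, lieBracket_VF _ _ _ _ _ _ _ _ _ _ (dC 0) (dC 0) (dC 1) (dC 0) (dC 0) (dC 0) (dC 0) (dC 0) (dC 0) (differentiable_pow _)]
        refine mem_span_of_eq ?_ (Submodule.smul_mem _ ((-1:ℝ)) (mem_fam k l (Sum.inr (Sum.inr j))))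
        rw [fam_H, VF_smul]
        refine VF_ext ?_ ?_ ?_ ?_ ?_ <;> intro x <;> simp [deriv_const, deriv_id'', deriv_pow_field, deriv_const_mul_field', deriv_linear, deriv_mul_sub] <;> try ring
  · rcases b with b | j | j
    · obtain ⟨m, hm⟩ := b
      interval_cases m
      · rw [fam_F k l i, fam_e0' k l _ rfl, lieBracket_VF _ _ _ _ _ _ _ _ _ _ (dC 0) (dC 0) (dC 0) (differentiable_pow _) (dC 0) (dC 1) (dC 0) (dC 0) (dC 0) (dC 0)]
        refine mem_span_of_eq ?_ (Submodule.smul_mem _ ((-((i:ℕ):ℝ))) (mem_fam k l (Sum.inr (Sum.inl ⟨(i:ℕ) - 1, by have := i.2; omega⟩))))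
        rw [fam_F, VF_smul]
        refine VF_ext ?_ ?_ ?_ ?_ ?_ <;> intro x <;> simp [deriv_const, deriv_id'', deriv_pow_field, deriv_const_mul_field', deriv_linear, deriv_mul_sub] <;> try ring
      · rw [fam_F k l i, fam_e1' k l _ rfl, lieBracket_VF _ _ _ _ _ _ _ _ _ _ (dC 0) (dC 0) (dC 0) (differentiable_pow _) (dC 0) differentiable_fun_id (dC 0) (dC 0) (dC 0) (dC 0)]
        refine mem_span_of_eq ?_ (Submodule.smul_mem _ ((-((i:ℕ):ℝ))) (mem_fam k l (Sum.inr (Sum.inl i))))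
        rw [fam_F, VF_smul]
        refine VF_ext ?_ ?_ ?_ ?_ ?_ <;> intro x <;> simp [deriv_const, deriv_id'', deriv_pow_field, deriv_const_mul_field', deriv_linear, deriv_mul_sub]
        obtain ⟨n, hn⟩ := i
        cases n with
        | zero => simp; try ring
        | succ m => simp [pow_succ]; try ring
      · by_cases hsplit : (i:ℕ) + 1 < k
        · rw [fam_F k l i, fam_e2' k l _ rfl, lieBracket_VF _ _ _ _ _ _ _ _ _ _ (dC 0) (dC 0) (dC 0) (differentiable_pow _) (dC 0) (differentiable_pow 2) (differentiable_fun_id.const_mul _) (differentiable_fun_id.const_mul _) (dC 0) (dC 0)]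
          refine mem_span_of_eq ?_ (Submodule.smul_mem _ ((((k:ℝ)-1) - ((i:ℕ):ℝ))) (mem_fam k l (Sum.inr (Sum.inl ⟨(i:ℕ) + 1, hsplit⟩))))
          rw [fam_F, VF_smul]
          refine VF_ext ?_ ?_ ?_ ?_ ?_ <;> intro x <;> simp [deriv_const, deriv_id'', deriv_pow_field, deriv_const_mul_field', deriv_linear, deriv_mul_sub]
          obtain ⟨n, hn⟩ := i
          cases n with
          | zero => simp; try ring
          | succ m => simp [pow_succ]; try ring
        · have hedge : (i:ℕ) + 1 = k := by have := i.2; omega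
          rw [fam_F k l i, fam_e2' k l _ rfl, lieBracket_VF _ _ _ _ _ _ _ _ _ _ (dC 0) (dC 0) (dC 0) (differentiable_pow _) (dC 0) (differentiable_pow 2) (differentiable_fun_id.const_mul _) (differentiable_fun_id.const_mul _) (dC 0) (dC 0)]
          refine mem_span_of_eq (VF_eq_zero ?_ ?_ ?_ ?_ ?_) (Submodule.zero_mem _) <;> intro x <;>
            simp [deriv_const, deriv_id'', deriv_pow_field, deriv_const_mul_field', deriv_linear, deriv_mul_sub]
          obtain ⟨m2, hm2⟩ : ∃ m2, (i:ℕ) = m2 + 1 := ⟨(i:ℕ) - 1, by omega⟩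

          rw [hm2] at hedge ⊢

          rw [← hedge]

          push_cast

          simp

          ring
      · rw [fam_F k l i, fam_e3' k l _ rfl, lieBracket_VF _ _ _ _ _ _ _ _ _ _ (dC 0) (dC 0) (dC 0) (differentiable_pow _) (dC 0) (dC 0) (dC 1) (dC 0) (dC 0) (dC 0)]
        refine mem_span_of_eq ?_ (Submodule.smul_mem _ ((1:ℝ)) (mem_fam k l (Sum.inr (Sum.inl i))))
        rw [fam_F, VF_smul]
        refine VF_ext ?_ ?_ ?_ ?_ ?_ <;> intro x <;> simp [deriv_const, deriv_id'', deriv_pow_field, deriv_const_mul_field', deriv_linear, deriv_mul_sub] <;> try ring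
      · rw [fam_F k l i, fam_e4' k l _ rfl, lieBracket_VF _ _ _ _ _ _ _ _ _ _ (dC 0) (dC 0) (dC 0) (differentiable_pow _) (dC 0) (dC 0) (dC 0) (dC 1) (dC 0) (dC 0)]
        refine mem_span_of_eq (VF_eq_zero ?_ ?_ ?_ ?_ ?_) (Submodule.zero_mem _) <;> intro x <;>
          simp [deriv_const, deriv_id'', deriv_pow_field, deriv_const_mul_field', deriv_linear, deriv_mul_sub] <;> try ring
    · rw [fam_F k l i, fam_F k l j, lieBracket_VF _ _ _ _ _ _ _ _ _ _ (dC 0) (dC 0) (dC 0) (differentiable_pow _) (dC 0) (dC 0) (dC 0) (dC 0) (differentiable_pow _) (dC 0)]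
      refine mem_span_of_eq (VF_eq_zero ?_ ?_ ?_ ?_ ?_) (Submodule.zero_mem _) <;> intro x <;>
        simp [deriv_const, deriv_id'', deriv_pow_field, deriv_const_mul_field', deriv_linear, deriv_mul_sub] <;> try ring
    · rw [fam_F k l i, fam_H k l j, lieBracket_VF _ _ _ _ _ _ _ _ _ _ (dC 0) (dC 0) (dC 0) (differentiable_pow _) (dC 0) (dC 0) (dC 0) (dC 0) (dC 0) (differentiable_pow _)]
      refine mem_span_of_eq (VF_eq_zero ?_ ?_ ?_ ?_ ?_) (Submodule.zero_mem _) <;> intro x <;>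
        simp [deriv_const, deriv_id'', deriv_pow_field, deriv_const_mul_field', deriv_linear, deriv_mul_sub] <;> try ring
  · rcases b with b | j | j
    · obtain ⟨m, hm⟩ := b
      interval_cases m
      · rw [fam_H k l i, fam_e0' k l _ rfl, lieBracket_VF _ _ _ _ _ _ _ _ _ _ (dC 0) (dC 0) (dC 0) (dC 0) (differentiable_pow _) (dC 1) (dC 0) (dC 0) (dC 0) (dC 0)]
        refine mem_span_of_eq ?_ (Submodule.smul_mem _ ((-((i:ℕ):ℝ))) (mem_fam k l (Sum.inr (Sum.inr ⟨(i:ℕ) - 1, by have := i.2; omega⟩))))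
        rw [fam_H, VF_smul]
        refine VF_ext ?_ ?_ ?_ ?_ ?_ <;> intro x <;> simp [deriv_const, deriv_id'', deriv_pow_field, deriv_const_mul_field', deriv_linear, deriv_mul_sub] <;> try ring
      · rw [fam_H k l i, fam_e1' k l _ rfl, lieBracket_VF _ _ _ _ _ _ _ _ _ _ (dC 0) (dC 0) (dC 0) (dC 0) (differentiable_pow _) differentiable_fun_id (dC 0) (dC 0) (dC 0) (dC 0)]
        refine mem_span_of_eq ?_ (Submodule.smul_mem _ ((-((i:ℕ):ℝ))) (mem_fam k l (Sum.inr (Sum.inr i))))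
        rw [fam_H, VF_smul]
        refine VF_ext ?_ ?_ ?_ ?_ ?_ <;> intro x <;> simp [deriv_const, deriv_id'', deriv_pow_field, deriv_const_mul_field', deriv_linear, deriv_mul_sub]
        obtain ⟨n, hn⟩ := i
        cases n with
        | zero => simp; try ring
        | succ m => simp [pow_succ]; try ring
      · by_cases hsplit : (i:ℕ) + 1 < l
        · rw [fam_H k l i, fam_e2' k l _ rfl, lieBracket_VF _ _ _ _ _ _ _ _ _ _ (dC 0) (dC 0) (dC 0) (dC 0) (differentiable_pow _) (differentiable_pow 2) (differentiable_fun_id.const_mul _) (differentiable_fun_id.const_mul _) (dC 0) (dC 0)]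
          refine mem_span_of_eq ?_ (Submodule.smul_mem _ ((((l:ℝ)-1) - ((i:ℕ):ℝ))) (mem_fam k l (Sum.inr (Sum.inr ⟨(i:ℕ) + 1, hsplit⟩))))
          rw [fam_H, VF_smul]
          refine VF_ext ?_ ?_ ?_ ?_ ?_ <;> intro x <;> simp [deriv_const, deriv_id'', deriv_pow_field, deriv_const_mul_field', deriv_linear, deriv_mul_sub]
          obtain ⟨n, hn⟩ := i
          cases n with
          | zero => simp; try ring
          | succ m => simp [pow_succ]; try ring
        · have hedge : (i:ℕ) + 1 = l := by have := i.2; omega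
          rw [fam_H k l i, fam_e2' k l _ rfl, lieBracket_VF _ _ _ _ _ _ _ _ _ _ (dC 0) (dC 0) (dC 0) (dC 0) (differentiable_pow _) (differentiable_pow 2) (differentiable_fun_id.const_mul _) (differentiable_fun_id.const_mul _) (dC 0) (dC 0)]
          refine mem_span_of_eq (VF_eq_zero ?_ ?_ ?_ ?_ ?_) (Submodule.zero_mem _) <;> intro x <;>
            simp [deriv_const, deriv_id'', deriv_pow_field, deriv_const_mul_field', deriv_linear, deriv_mul_sub]
          obtain ⟨m2, hm2⟩ : ∃ m2, (i:ℕ) = m2 + 1 := ⟨(i:ℕ) - 1, by omega⟩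

          rw [hm2] at hedge ⊢

          rw [← hedge]

          push_cast

          simp

          ring
      · rw [fam_H k l i, fam_e3' k l _ rfl, lieBracket_VF _ _ _ _ _ _ _ _ _ _ (dC 0) (dC 0) (dC 0) (dC 0) (differentiable_pow _) (dC 0) (dC 1) (dC 0) (dC 0) (dC 0)]
        refine mem_span_of_eq (VF_eq_zero ?_ ?_ ?_ ?_ ?_) (Submodule.zero_mem _) <;> intro x <;>
          simp [deriv_const, deriv_id'', deriv_pow_field, deriv_const_mul_field', deriv_linear, deriv_mul_sub] <;> try ring
      · rw [fam_H k l i, fam_e4' k l _ rfl, lieBracket_VF _ _ _ _ _ _ _ _ _ _ (dC 0) (dC 0) (dC 0) (dC 0) (differentiable_pow _) (dC 0) (dC 0) (dC 1) (dC 0) (dC 0)]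
        refine mem_span_of_eq ?_ (Submodule.smul_mem _ ((1:ℝ)) (mem_fam k l (Sum.inr (Sum.inr i))))
        rw [fam_H, VF_smul]
        refine VF_ext ?_ ?_ ?_ ?_ ?_ <;> intro x <;> simp [deriv_const, deriv_id'', deriv_pow_field, deriv_const_mul_field', deriv_linear, deriv_mul_sub] <;> try ring
    · rw [fam_H k l i, fam_F k l j, lieBracket_VF _ _ _ _ _ _ _ _ _ _ (dC 0) (dC 0) (dC 0) (dC 0) (differentiable_pow _) (dC 0) (dC 0) (dC 0) (differentiable_pow _) (dC 0)]
      refine mem_span_of_eq (VF_eq_zero ?_ ?_ ?_ ?_ ?_) (Submodule.zero_mem _) <;> intro x <;>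
        simp [deriv_const, deriv_id'', deriv_pow_field, deriv_const_mul_field', deriv_linear, deriv_mul_sub] <;> try ring
    · rw [fam_H k l i, fam_H k l j, lieBracket_VF _ _ _ _ _ _ _ _ _ _ (dC 0) (dC 0) (dC 0) (dC 0) (differentiable_pow _) (dC 0) (dC 0) (dC 0) (dC 0) (differentiable_pow _)]
      refine mem_span_of_eq (VF_eq_zero ?_ ?_ ?_ ?_ ?_) (Submodule.zero_mem _) <;> intro x <;>
        simp [deriv_const, deriv_id'', deriv_pow_field, deriv_const_mul_field', deriv_linear, deriv_mul_sub] <;> try ring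

lemma span_diff (k l : ℕ) :
    ∀ X ∈ Submodule.span ℝ (Set.range (famShift k l)), Differentiable ℝ X := by
  intro X hX
  induction hX using Submodule.span_induction with
  | mem x hx => obtain ⟨a, rfl⟩ := hx; exact fam_diff k l a
  | zero => exact (differentiable_const (0 : Fin 3 → ℝ))
  | add f g _ _ hf hg => exact hf.add hg
  | smul c f _ hf => exact hf.const_smul c

lemma closure_lemma (k l : ℕ) (hk : 2 ≤ k) (hkl : k ≤ l) :
    ∀ V ∈ Submodule.span ℝ (Set.range (famShift k l)),
    ∀ W ∈ Submodule.span ℝ (Set.range (famShift k l)),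
      VectorField.lieBracket ℝ V W ∈ Submodule.span ℝ (Set.range (famShift k l)) := by
  intro V hV W hW
  induction hV using Submodule.span_induction with
  | mem x hx =>
    induction hW using Submodule.span_induction with
    | mem y hy =>
      obtain ⟨a, rfl⟩ := hx; obtain ⟨b, rfl⟩ := hy
      exact bracket_base k l hk hkl a b
    | zero =>
      have : VectorField.lieBracket ℝ x 0 = 0 := by
        funext p
        simp [VectorField.lieBracket, show (0 : (Fin 3 → ℝ) → Fin 3 → ℝ) = fun _ => 0 from rfl, fderiv_const]
      rw [this]; exact Submodule.zero_mem _
    | add y z hy hz ihy ihz =>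
      have : VectorField.lieBracket ℝ x (y + z) =
          VectorField.lieBracket ℝ x y + VectorField.lieBracket ℝ x z := by
        funext p
        exact VectorField.lieBracket_add_right (span_diff k l y hy p) (span_diff k l z hz p)
      rw [this]; exact Submodule.add_mem _ ihy ihz
    | smul c y hy ihy =>
      have : VectorField.lieBracket ℝ x (c • y) = c • VectorField.lieBracket ℝ x y := by
        funext p
        rw [show c • y = fun y' => (fun _ => c) y' • y y' from rfl,
          VectorField.lieBracket_smul_right (differentiableAt_const c) (span_diff k l y hy p)]
        simp
      rw [this]; exact Submodule.smul_mem _ _ ihy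
  | zero =>
    have : VectorField.lieBracket ℝ 0 W = 0 := by
      funext p
      simp [VectorField.lieBracket, show (0 : (Fin 3 → ℝ) → Fin 3 → ℝ) = fun _ => 0 from rfl, fderiv_const]
    rw [this]; exact Submodule.zero_mem _
  | add x y hx hy ihx ihy =>
    have : VectorField.lieBracket ℝ (x + y) W =
        VectorField.lieBracket ℝ x W + VectorField.lieBracket ℝ y W := by
      funext p
      exact VectorField.lieBracket_add_left (span_diff k l x hx p) (span_diff k l y hy p)
    rw [this]; exact Submodule.add_mem _ ihx ihy
  | smul c x hx ihx =>
    have : VectorField.lieBracket ℝ (c • x) W = c • VectorField.lieBracket ℝ x W := by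
      funext p
      rw [show c • x = fun y' => (fun _ => c) y' • x y' from rfl,
        VectorField.lieBracket_smul_left (differentiableAt_const c) (span_diff k l x hx p)]
      simp
    rw [this]; exact Submodule.smul_mem _ _ ihx

lemma li_lemma (k l : ℕ) (hk : 2 ≤ k) (hkl : k ≤ l) :
    LinearIndependent ℝ (famShift k l) := by
  rw [Fintype.linearIndependent_iff]
  intro g hg
  have h1 : ∀ p : Fin 3 → ℝ, ∀ j : Fin 3,
      (∑ a : Fin 5, g (Sum.inl a) * famShift k l (Sum.inl a) p j) +
      ((∑ i : Fin k, g (Sum.inr (Sum.inl i)) * famShift k l (Sum.inr (Sum.inl i)) p j) +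
       (∑ i : Fin l, g (Sum.inr (Sum.inr i)) * famShift k l (Sum.inr (Sum.inr i)) p j)) = 0 := by
    intro p j
    have := congrFun (congrFun hg p) j
    simp only [Finset.sum_apply, Pi.smul_apply, smul_eq_mul, Pi.zero_apply,
      Fintype.sum_sum_type] at this
    exact this
  -- x-component polynomial
  have hx : ∀ a : Fin 3, ![g (Sum.inl 0), g (Sum.inl 1), g (Sum.inl 2)] a = 0 := by
    apply poly_aux
    intro t
    have := h1 ![t, 0, 0] 0
    simp [famShift, Fin.sum_univ_five, Matrix.vecHead, Matrix.vecTail] at this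
    rw [Fin.sum_univ_three]
    simpa [pow_two] using this
  have hF : ∀ i : Fin k, g (Sum.inr (Sum.inl i)) = 0 := by
    apply poly_aux
    intro t
    have := h1 ![t, 0, 0] 1
    simpa [famShift, Fin.sum_univ_five, Matrix.vecHead, Matrix.vecTail] using this
  have hH : ∀ i : Fin l, g (Sum.inr (Sum.inr i)) = 0 := by
    apply poly_aux
    intro t
    have := h1 ![t, 0, 0] 2
    simpa [famShift, Fin.sum_univ_five, Matrix.vecHead, Matrix.vecTail] using this
  have hg0 : g (Sum.inl 0) = 0 := by simpa using hx 0
  have hg1 : g (Sum.inl 1) = 0 := by simpa using hx 1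
  have hg2 : g (Sum.inl 2) = 0 := by simpa using hx 2
  have hg3 : g (Sum.inl 3) = 0 := by
    have := h1 ![0, 1, 0] 1
    simpa [famShift, Fin.sum_univ_five, Matrix.vecHead, Matrix.vecTail, hF] using this
  have hg4 : g (Sum.inl 4) = 0 := by
    have := h1 ![0, 0, 1] 2
    simpa [famShift, Fin.sum_univ_five, Matrix.vecHead, Matrix.vecTail, hH] using this
  intro a
  rcases a with a | i | i
  · obtain ⟨n, hn⟩ := a
    interval_cases n
    · exact hg0
    · exact hg1
    · exact hg2
    · exact hg3
    · exact hg4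
  · exact hF i
  · exact hH i

/-- for `2 ≤ k ≤ l` these `5 + k + l` vector fields are linearly independent
over `ℝ` and their span is closed under the Lie bracket of vector fields. -/
theorem stmt_18 (k l : ℕ) (hk : 2 ≤ k) (hkl : k ≤ l) :
    LinearIndependent ℝ (famShift k l) ∧
    (∀ V ∈ Submodule.span ℝ (Set.range (famShift k l)),
     ∀ W ∈ Submodule.span ℝ (Set.range (famShift k l)),
      VectorField.lieBracket ℝ V W ∈ Submodule.span ℝ (Set.range (famShift k l))) :=
  ⟨li_lemma k l hk hkl, closure_lemma k l hk hkl⟩
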